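/- Let γ ∈ (0,1), φ > 0, ν ∈ (0,1), k ∈ ℝ. The function h(x,t) = x^(ν/2) E_γ(−φ t^γ) satisfies h(x,0) = x^(ν/2), h(0,t) = 0, and the space-time fractional equation ∂^γ h/∂t^γ = k ∂/∂x ( h · ∂^ν h/∂x^ν ) − φ h for x > 0, t > 0. -/

import Mathlib

/-- Caputo fractional derivative of order `ν` with zero starting point. -/
noncomputable def caputo (ν : ℝ) (f : ℝ → ℝ) (z : ℝ) : ℝ :=
  (Real.Gamma (1 - ν))⁻¹ * ∫ s in (0:ℝ)..z, (z - s) ^ (-ν) * deriv f s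

/-- One-parameter Mittag-Leffler function evaluated at `-φ * t ^ γ`. -/
noncomputable def mittagLeffler (γ φ t : ℝ) : ℝ :=
  ∑' i : ℕ, (-φ * t ^ γ) ^ i / Real.Gamma (γ * i + 1)

open Real Set MeasureTheory Filter intervalIntegral

lemma gamma_lower {γ x : ℝ} (hγ : 0 < γ) (hγ1 : γ < 1) (hx : 0 < x) :
    x * Real.Gamma x ≤ Real.Gamma (x + γ) * (x + γ) ^ (1 - γ) := by
  have hxγ : 0 < x + γ := by linarith
  have key := Real.Gamma_mul_add_mul_le_rpow_Gamma_mul_rpow_Gamma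
    (s := x + γ) (t := x + γ + 1) hxγ (by linarith) hγ (by linarith)
    (by ring : γ + (1 - γ) = 1)
  have h1 : γ * (x + γ) + (1 - γ) * (x + γ + 1) = x + 1 := by ring
  rw [h1, Real.Gamma_add_one (ne_of_gt hx), Real.Gamma_add_one (ne_of_gt hxγ)] at key
  have hG : 0 < Real.Gamma (x + γ) := Real.Gamma_pos_of_pos hxγ
  calc x * Real.Gamma x ≤ Real.Gamma (x+γ) ^ γ * ((x+γ) * Real.Gamma (x+γ)) ^ (1-γ) := key
    _ = Real.Gamma (x + γ) * (x + γ) ^ (1 - γ) := by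
        rw [Real.mul_rpow hxγ.le hG.le, ← mul_assoc,
          mul_comm (Real.Gamma (x+γ) ^ γ), mul_assoc, mul_comm (Real.Gamma (x+γ) ^ γ),
          ← Real.rpow_add hG, sub_add_cancel, Real.rpow_one, mul_comm]

lemma summable_gamma {γ : ℝ} (hγ : 0 < γ) (hγ1 : γ < 1) (C d : ℝ) (hC : 0 ≤ C) (hd : 0 < d) :
    Summable (fun i : ℕ => ((i : ℝ) + 1) * C ^ i / Real.Gamma (γ * i + d)) := by
  apply summable_of_ratio_norm_eventually_le (r := 1/2) (by norm_num)
  have htend : Tendsto (fun i : ℕ => γ * i + d) atTop atTop :=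
    (tendsto_natCast_atTop_atTop.const_mul_atTop hγ).atTop_add tendsto_const_nhds
  have htend2 : Tendsto (fun i : ℕ => (γ * i + d) ^ γ) atTop atTop :=
    (tendsto_rpow_atTop hγ).comp htend
  filter_upwards [htend.eventually_ge_atTop 1, htend2.eventually_ge_atTop (8 * C)]
    with i hx1 hx8
  set x : ℝ := γ * i + d with hxdef
  have hx0 : 0 < x := by positivity
  have hG : 0 < Real.Gamma x := Real.Gamma_pos_of_pos hx0
  have hGγ : 0 < Real.Gamma (x + γ) := Real.Gamma_pos_of_pos (by linarith)
  have harg : γ * ((i + 1 : ℕ) : ℝ) + d = x + γ := by push_cast; ring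
  rw [harg, Real.norm_of_nonneg (by positivity), Real.norm_of_nonneg (by positivity),
    mul_div_assoc' (1/2 : ℝ), div_le_div_iff₀ hGγ hG]
  -- key inequalities
  have key := gamma_lower hγ hγ1 hx0
  have k2 : (x + γ) ^ (1 - γ) * x ^ γ ≤ 2 * x := by
    have e1 : (x + γ) ^ (1 - γ) ≤ (2 * x) ^ (1 - γ) :=
      Real.rpow_le_rpow (by positivity) (by linarith) (by linarith)
    have e2 : (2 * x) ^ (1 - γ) = 2 ^ (1 - γ) * x ^ (1 - γ) :=
      Real.mul_rpow (by norm_num) hx0.le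
    have e3 : (2:ℝ) ^ (1 - γ) ≤ 2 := by
      calc (2:ℝ) ^ (1-γ) ≤ (2:ℝ) ^ (1:ℝ) :=
            Real.rpow_le_rpow_of_exponent_le one_le_two (by linarith)
        _ = 2 := Real.rpow_one 2
    have e4 : x ^ (1 - γ) * x ^ γ = x := by
      rw [← Real.rpow_add hx0]; simp
    calc (x + γ) ^ (1-γ) * x ^ γ ≤ (2 ^ (1-γ) * x ^ (1-γ)) * x ^ γ := by
          rw [← e2]
          exact mul_le_mul_of_nonneg_right e1 (Real.rpow_nonneg hx0.le γ)
      _ = 2 ^ (1-γ) * x := by rw [mul_assoc, e4]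
      _ ≤ 2 * x := mul_le_mul_of_nonneg_right e3 hx0.le
  have hxγpos : (0:ℝ) < x ^ γ := Real.rpow_pos_of_pos hx0 γ
  have k3 : Real.Gamma x * x ^ γ ≤ 2 * Real.Gamma (x + γ) := by
    have := mul_le_mul_of_nonneg_right key hxγpos.le
    -- x * Γ x * x^γ ≤ Γ(x+γ) * (x+γ)^(1-γ) * x^γ ≤ Γ(x+γ) * 2x
    have h2 : Real.Gamma (x+γ) * (x+γ)^(1-γ) * x^γ ≤ Real.Gamma (x+γ) * (2*x) := by
      rw [mul_assoc]
      exact mul_le_mul_of_nonneg_left k2 hGγ.le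
    have h3 : x * (Real.Gamma x * x ^ γ) ≤ x * (2 * Real.Gamma (x+γ)) := by nlinarith
    exact le_of_mul_le_mul_left h3 hx0
  have claim : 4 * (C * Real.Gamma x) ≤ Real.Gamma (x + γ) := by
    have e1 : C * Real.Gamma x ≤ x ^ γ / 8 * Real.Gamma x :=
      mul_le_mul_of_nonneg_right (by linarith) hG.le
    nlinarith
  have hCi : (0:ℝ) ≤ C ^ i := by positivity
  have hin : (0:ℝ) ≤ (i:ℝ) + 1 := by positivity
  push_cast
  rw [pow_succ]
  nlinarith [mul_le_mul_of_nonneg_left (mul_le_mul_of_nonneg_left claim hCi) hin,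
    mul_nonneg hCi (mul_nonneg hC hG.le), Nat.cast_nonneg (α := ℝ) i,
    mul_nonneg (Nat.cast_nonneg (α := ℝ) i) (mul_nonneg hCi (mul_nonneg hC hG.le))]

lemma betaLeft {a z : ℝ} (b : ℝ) (ha : 0 < a) (hz : 0 < z) :
    IntervalIntegrable (fun s => s ^ (a-1) * (z-s) ^ (b-1)) volume 0 (z/2) := by
  apply (intervalIntegral.intervalIntegrable_rpow' (by linarith : (-1:ℝ) < a - 1)).mul_continuousOn
  apply ContinuousOn.rpow_const
  · exact (continuous_const.sub continuous_id).continuousOn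
  · intro x hx
    rw [Set.uIcc_of_le (by linarith : (0:ℝ) ≤ z/2)] at hx
    left
    have : x ≤ z/2 := hx.2
    intro hcon
    linarith

lemma betaIntegrable {a b z : ℝ} (ha : 0 < a) (hb : 0 < b) (hz : 0 < z) :
    IntervalIntegrable (fun s => s ^ (a-1) * (z-s) ^ (b-1)) volume 0 z := by
  refine (betaLeft b ha hz).trans ?_
  have h1 := (betaLeft a hb hz).comp_sub_left z
  have h2 : (fun x => (fun s => s ^ (b-1) * (z-s) ^ (a-1)) (z - x))
      = fun x => x ^ (a-1) * (z-x) ^ (b-1) := by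
    funext x; simp only [sub_sub_cancel]; ring
  rw [h2] at h1
  have e1 : z - 0 = z := by ring
  have e2 : z - z/2 = z/2 := by ring
  rw [e1, e2] at h1
  exact h1.symm

lemma betaValue {a b z : ℝ} (ha : 0 < a) (hb : 0 < b) (hz : 0 < z) :
    ∫ s in (0:ℝ)..z, s ^ (a-1) * (z-s) ^ (b-1)
      = z ^ (a+b-1) * (Real.Gamma a * Real.Gamma b / Real.Gamma (a+b)) := by
  have hab : (0:ℝ) < a + b := by linarith
  have hGab : Complex.Gamma ((a:ℂ) + b) ≠ 0 := by
    rw [← Complex.ofReal_add, Complex.Gamma_ofReal]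
    exact_mod_cast (Real.Gamma_pos_of_pos hab).ne'
  have hbeta : Complex.betaIntegral a b
      = Complex.Gamma a * Complex.Gamma b / Complex.Gamma ((a:ℂ)+b) := by
    rw [eq_div_iff hGab, Complex.Gamma_mul_Gamma_eq_betaIntegral
      (by simpa using ha) (by simpa using hb), mul_comm]
  have hscaled := Complex.betaIntegral_scaled (a : ℂ) (b : ℂ) hz
  rw [hbeta] at hscaled
  -- convert LHS to real
  have hcongr : (∫ x in (0:ℝ)..z, (x:ℂ) ^ ((a:ℂ)-1) * ((z:ℂ) - x) ^ ((b:ℂ)-1))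
      = ((∫ s in (0:ℝ)..z, s ^ (a-1) * (z-s) ^ (b-1) : ℝ) : ℂ) := by
    rw [← intervalIntegral.integral_ofReal]
    apply intervalIntegral.integral_congr
    intro x hx
    rw [Set.uIcc_of_le hz.le] at hx
    show (x:ℂ) ^ ((a:ℂ)-1) * ((z:ℂ) - x) ^ ((b:ℂ)-1) = ((x ^ (a-1) * (z-x)^(b-1) : ℝ) : ℂ)
    rw [Complex.ofReal_mul, Complex.ofReal_cpow hx.1 (a-1),
      Complex.ofReal_cpow (by linarith [hx.2] : (0:ℝ) ≤ z - x) (b-1)]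
    push_cast
    ring
  rw [hcongr] at hscaled
  have hrhs : ((z:ℂ)) ^ ((a:ℂ) + b - 1) * (Complex.Gamma a * Complex.Gamma b / Complex.Gamma ((a:ℂ)+b))
      = ((z ^ (a+b-1) * (Real.Gamma a * Real.Gamma b / Real.Gamma (a+b)) : ℝ) : ℂ) := by
    rw [Complex.ofReal_mul, Complex.ofReal_cpow hz.le, ← Complex.ofReal_add a b]
    simp only [Complex.Gamma_ofReal]
    push_cast
    ring
  rw [hrhs] at hscaled
  exact_mod_cast hscaled

noncomputable def mlc (γ φ : ℝ) (i : ℕ) : ℝ := (-φ)^i / Real.Gamma (γ*i+1)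

lemma abs_mlc {γ φ : ℝ} (hγ : 0 < γ) (hφ : 0 < φ) (i : ℕ) :
    |mlc γ φ i| = φ ^ i / Real.Gamma (γ*i+1) := by
  have hG : 0 < Real.Gamma (γ*i+1) := Real.Gamma_pos_of_pos (by positivity)
  rw [mlc, abs_div, abs_pow, abs_neg, abs_of_pos hφ, abs_of_pos hG]

lemma mlc_le {γ φ : ℝ} (hγ : 0 < γ) (hγ1 : γ < 1) (hφ : 0 < φ) (A : ℝ) (hA : 0 ≤ A) (i : ℕ) :
    |mlc γ φ i| * A ^ i ≤ ((i:ℝ)+1) * (φ * A) ^ i / Real.Gamma (γ*i+1) := by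
  have hG : 0 < Real.Gamma (γ*i+1) := Real.Gamma_pos_of_pos (by positivity)
  rw [abs_mlc hγ hφ, div_mul_eq_mul_div, mul_pow]
  have h1 : (1:ℝ) ≤ (i:ℝ)+1 := by linarith [Nat.cast_nonneg (α := ℝ) i]
  have h2 : (0:ℝ) ≤ φ^i * A^i := by positivity
  exact (div_le_div_iff_of_pos_right hG).mpr (le_mul_of_one_le_left h2 h1)

lemma summable_mlc_pow {γ φ : ℝ} (hγ : 0 < γ) (hγ1 : γ < 1) (hφ : 0 < φ) (A : ℝ) (hA : 0 ≤ A) :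
    Summable (fun i : ℕ => mlc γ φ i * A ^ i) := by
  apply Summable.of_norm
  apply Summable.of_nonneg_of_le (fun i => norm_nonneg _)
    (fun i => ?_) ((summable_gamma hγ hγ1 (φ*A) 1 (by positivity) one_pos))
  rw [Real.norm_eq_abs, abs_mul, abs_pow, abs_of_nonneg hA]
  exact mlc_le hγ hγ1 hφ A hA i

lemma ml_eq_tsum {γ φ : ℝ} (hγ : 0 < γ) {τ : ℝ} (hτ : 0 ≤ τ) :
    mittagLeffler γ φ τ = ∑' i : ℕ, mlc γ φ i * τ ^ (γ * i) := by
  rw [mittagLeffler]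
  congr 1; funext i
  rw [mul_pow, mlc, ← Real.rpow_natCast (τ ^ γ) i, ← Real.rpow_mul hτ]
  ring

lemma ml_zero {γ φ : ℝ} (hγ : 0 < γ) : mittagLeffler γ φ 0 = 1 := by
  rw [mittagLeffler]
  rw [tsum_eq_single 0 ?_]
  · norm_num [Real.Gamma_one]
  · intro i hi
    rw [Real.zero_rpow hγ.ne', mul_zero, zero_pow hi, zero_div]

lemma F_hasDerivAt {γ φ : ℝ} (hγ : 0 < γ) (hγ1 : γ < 1) (hφ : 0 < φ) {s : ℝ} (hs : 0 < s) :
    HasDerivAt (fun τ : ℝ => ∑' i : ℕ, mlc γ φ i * τ ^ (γ * i))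
      (∑' i : ℕ, mlc γ φ i * ((γ * i) * s ^ (γ * i - 1))) s := by
  set T : ℝ := 2*s+1 with hT
  have hT1 : 1 ≤ T := by linarith
  have hTpos : (0:ℝ) < T := by linarith
  set u : ℕ → ℝ := fun i => (2*γ/s) * (((i:ℝ)+1) * (φ * T^γ) ^ i / Real.Gamma (γ*i+1)) with hu
  have hu_sum : Summable u :=
    (summable_gamma hγ hγ1 (φ * T^γ) 1 (by positivity) one_pos).mul_left _
  apply hasDerivAt_tsum_of_isPreconnected hu_sum (isOpen_Ioo (a := s/2) (b := T))
    ((convex_Ioo _ _).isPreconnected)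
    (g := fun i y => mlc γ φ i * y ^ (γ * i))
    (g' := fun i y => mlc γ φ i * ((γ * i) * y ^ (γ * i - 1)))
    (y₀ := s) (y := s) ?_ ?_ ?_ ?_ ?_
  · -- HasDerivAt each term
    intro i y hy
    have hy0 : y ≠ 0 := ne_of_gt (lt_trans (by linarith : (0:ℝ) < s/2) hy.1)
    exact (Real.hasDerivAt_rpow_const (Or.inl hy0)).const_mul _
  · -- bound
    intro i y hy
    have hy0 : 0 < y := lt_trans (by linarith) hy.1
    have hyT : y ≤ T := le_of_lt hy.2
    have hys : s/2 ≤ y := le_of_lt hy.1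
    rw [Real.norm_eq_abs, abs_mul, abs_mul, abs_of_nonneg (by positivity : (0:ℝ) ≤ γ * i)]
    have h1 : |y ^ (γ * i - 1)| = y ^ (γ*i) / y := by
      rw [abs_of_nonneg (Real.rpow_nonneg hy0.le _), Real.rpow_sub hy0, Real.rpow_one]
    rw [h1]
    have h2 : y ^ (γ*i) ≤ T ^ (γ*i) := Real.rpow_le_rpow hy0.le hyT (by positivity)
    have h3 : y ^ (γ*i) / y ≤ T ^ (γ*i) * (2/s) := by
      rw [div_eq_mul_inv]
      apply mul_le_mul h2 _ (by positivity) (by positivity)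
      rw [inv_le_comm₀ hy0 (by positivity), inv_div]
      linarith [hys]
    have h4 : T ^ (γ * (i:ℕ)) = (T^γ)^i := by
      rw [← Real.rpow_natCast (T^γ) i, ← Real.rpow_mul hTpos.le]
    calc |mlc γ φ i| * (γ*i * (y ^ (γ*i)/y))
        ≤ |mlc γ φ i| * (γ*i * (T^(γ*i) * (2/s))) := by
          apply mul_le_mul_of_nonneg_left _ (abs_nonneg _)
          exact mul_le_mul_of_nonneg_left h3 (by positivity)
      _ = (γ * i * (2/s)) * ((φ * T^γ)^i / Real.Gamma (γ*i+1)) := by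
          rw [h4, abs_mlc hγ hφ, mul_pow]; ring
      _ ≤ u i := by
          have hG : 0 < Real.Gamma (γ*i+1) := Real.Gamma_pos_of_pos (by positivity)
          have hX : (0:ℝ) ≤ (φ*T^γ)^i / Real.Gamma (γ*i+1) := by positivity
          have hii : γ * (i:ℝ) * (2/s) ≤ 2*γ/s * ((i:ℝ)+1) := by
            have h5 : (i:ℝ) ≤ (i:ℝ)+1 := by linarith
            have h6 : (0:ℝ) ≤ 2*γ/s := by positivity
            have h7 : γ * (i:ℝ) * (2/s) = 2*γ/s*(i:ℝ) := by ring
            rw [h7]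
            exact mul_le_mul_of_nonneg_left h5 h6
          calc (γ*(i:ℝ)*(2/s)) * ((φ*T^γ)^i / Real.Gamma (γ*i+1))
              ≤ (2*γ/s*((i:ℝ)+1)) * ((φ*T^γ)^i / Real.Gamma (γ*i+1)) :=
                mul_le_mul_of_nonneg_right hii hX
            _ = u i := by rw [hu]; ring
  · exact ⟨by linarith, by linarith⟩
  · -- summable at s
    have h4 : ∀ i : ℕ, s ^ (γ * (i:ℕ)) = (s^γ)^i := fun i => by
      rw [← Real.rpow_natCast (s^γ) i, ← Real.rpow_mul hs.le]
    simpa only [h4] using summable_mlc_pow hγ hγ1 hφ (s^γ) (Real.rpow_nonneg hs.le γ)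
  · exact ⟨by linarith, by linarith⟩

section main
variable {γ φ t : ℝ}

/-- derivative of the Mittag-Leffler composite at positive points -/
lemma ml_hasDerivAt (hγ : 0 < γ) (hγ1 : γ < 1) (hφ : 0 < φ) {s : ℝ} (hs : 0 < s) :
    HasDerivAt (mittagLeffler γ φ)
      (∑' i : ℕ, mlc γ φ i * ((γ * i) * s ^ (γ * i - 1))) s := by
  apply (F_hasDerivAt hγ hγ1 hφ hs).congr_of_eventuallyEq
  filter_upwards [isOpen_Ioi.mem_nhds (show s ∈ Ioi (0:ℝ) from hs)] with τ hτ
  exact ml_eq_tsum hγ (le_of_lt hτ)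

lemma int_gi (hγ : 0 < γ) (hγ1 : γ < 1) (ht : 0 < t) {i : ℕ} (hi : 1 ≤ i) :
    IntegrableOn (fun s => s ^ (γ*↑i-1) * (t-s) ^ (-γ)) (Ioo 0 t) ∧
    ∫ s in Ioo 0 t, s ^ (γ*↑i-1) * (t-s) ^ (-γ)
      = t ^ (γ*↑i-γ) * (Real.Gamma (γ*↑i) * Real.Gamma (1-γ) / Real.Gamma (γ*↑i+1-γ)) := by
  have hia : (0:ℝ) < γ * i := by
    have : (1:ℝ) ≤ (i:ℝ) := by exact_mod_cast hi
    nlinarith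
  have hbb : (0:ℝ) < 1 - γ := by linarith
  have hexp : ((1:ℝ) - γ) - 1 = -γ := by ring
  have hII := betaIntegrable hia hbb ht
  have hval := betaValue hia hbb ht
  rw [hexp] at hII hval
  constructor
  · have := (intervalIntegrable_iff.mp hII)
    rw [uIoc_of_le ht.le] at this
    exact this.mono_set Ioo_subset_Ioc_self
  · rw [intervalIntegral.integral_of_le ht.le, integral_Ioc_eq_integral_Ioo] at hval
    rw [hval]
    have e1 : γ*↑i + (1-γ) - 1 = γ*↑i - γ := by ring
    have e2 : γ*↑i + (1-γ) = γ*↑i + 1 - γ := by ring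
    rw [e1, e2]

lemma caputo_ml (hγ : 0 < γ) (hγ1 : γ < 1) (hφ : 0 < φ) (ht : 0 < t) :
    caputo γ (mittagLeffler γ φ) t = -φ * mittagLeffler γ φ t := by
  have hGγ : 0 < Real.Gamma (1-γ) := Real.Gamma_pos_of_pos (by linarith)
  set V : ℕ → ℝ := fun i => (mlc γ φ i * (γ*↑i)) *
    (t ^ (γ*↑i-γ) * (Real.Gamma (γ*↑i) * Real.Gamma (1-γ) / Real.Gamma (γ*↑i+1-γ))) with hV
  have hmain : (∫ s in (0:ℝ)..t, (t-s) ^ (-γ) * deriv (mittagLeffler γ φ) s)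
      = ∑' i : ℕ, V i := by
    rw [intervalIntegral.integral_of_le ht.le, integral_Ioc_eq_integral_Ioo]
    have hEq : EqOn (fun s => (t-s) ^ (-γ) * deriv (mittagLeffler γ φ) s)
        (fun s => ∑' i : ℕ, (mlc γ φ i * (γ*↑i)) * (s ^ (γ*↑i-1) * (t-s) ^ (-γ)))
        (Ioo 0 t) := by
      intro s hs
      have hd := (ml_hasDerivAt hγ hγ1 hφ hs.1).deriv
      simp only
      rw [hd, ← tsum_mul_left]
      exact tsum_congr fun i => by ring
    rw [setIntegral_congr_fun measurableSet_Ioo hEq]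
    have hInt : ∀ i : ℕ, IntegrableOn
        (fun s => (mlc γ φ i * (γ*↑i)) * (s ^ (γ*↑i-1) * (t-s) ^ (-γ))) (Ioo 0 t) := by
      intro i
      rcases Nat.eq_zero_or_pos i with h0 | h1
      · subst h0
        simp only [Nat.cast_zero, mul_zero, zero_mul]
        exact integrable_zero _ _ _
      · exact ((int_gi hγ hγ1 ht h1).1).const_mul _
    have hval : ∀ i : ℕ, (∫ s in Ioo 0 t, (mlc γ φ i * (γ*↑i)) * (s ^ (γ*↑i-1) * (t-s) ^ (-γ)))
        = V i := by
      intro i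
      rcases Nat.eq_zero_or_pos i with h0 | h1
      · subst h0
        simp [hV]
      · rw [MeasureTheory.integral_const_mul, (int_gi hγ hγ1 ht h1).2, hV]
    -- lintegral bound
    set U : ℕ → ℝ := fun i => (Real.Gamma (1-γ) * t ^ (-γ)) *
      (((i:ℝ)+1) * (φ * t^γ) ^ i / Real.Gamma (γ*↑i + (1-γ))) with hU
    have hU_nonneg : ∀ i, 0 ≤ U i := by
      intro i
      have hg : (0:ℝ) < Real.Gamma (γ*↑i + (1-γ)) :=
        Real.Gamma_pos_of_pos (by have h := Nat.cast_nonneg (α := ℝ) i; nlinarith)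
      have h2 : (0:ℝ) ≤ (φ * t^γ)^i :=
        pow_nonneg (mul_nonneg hφ.le (Real.rpow_nonneg ht.le γ)) i
      have h3 : (0:ℝ) ≤ ((i:ℝ)+1) := by positivity
      have h4 : (0:ℝ) ≤ t ^ (-γ) := Real.rpow_nonneg ht.le _
      exact mul_nonneg (mul_nonneg hGγ.le h4) (div_nonneg (mul_nonneg h3 h2) hg.le)
    have hU_sum : Summable U :=
      (summable_gamma hγ hγ1 (φ * t^γ) (1-γ)
        (mul_nonneg hφ.le (Real.rpow_nonneg ht.le γ)) (by linarith)).mul_left _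
    have hWfin : ∀ i : ℕ, |mlc γ φ i * (γ*↑i)| *
        (t ^ (γ*↑i-γ) * (Real.Gamma (γ*↑i) * Real.Gamma (1-γ) / Real.Gamma (γ*↑i+1-γ)))
        ≤ U i := by
      intro i
      rcases Nat.eq_zero_or_pos i with h0 | h1
      · subst h0
        simp only [Nat.cast_zero, mul_zero, abs_zero, zero_mul]
        exact hU_nonneg 0
      · have hone : (1:ℝ) ≤ (i:ℝ) := by exact_mod_cast h1
        have hxi : (0:ℝ) < γ * ↑i := by nlinarith
        have hGi : 0 < Real.Gamma (γ*↑i) := Real.Gamma_pos_of_pos hxi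
        have hGi1 : 0 < Real.Gamma (γ*↑i+1) := Real.Gamma_pos_of_pos (by linarith)
        have hGig : 0 < Real.Gamma (γ*↑i+1-γ) := Real.Gamma_pos_of_pos (by linarith)
        have hGadd : Real.Gamma (γ*↑i+1) = (γ*↑i) * Real.Gamma (γ*↑i) :=
          Real.Gamma_add_one hxi.ne'
        have htpow : t ^ (γ*↑i-γ) = (t^γ)^i * t^(-γ) := by
          rw [show γ*↑i-γ = γ*↑i + (-γ) from by ring, Real.rpow_add ht,
            ← Real.rpow_natCast (t^γ) i, ← Real.rpow_mul ht.le]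
        have habs : |mlc γ φ i * (γ*↑i)| = (φ^i / Real.Gamma (γ*↑i+1)) * (γ*↑i) := by
          rw [abs_mul, abs_mlc hγ hφ, abs_of_nonneg hxi.le]
        rw [habs, htpow, hU]
        have hlhs : (φ^i / Real.Gamma (γ*↑i+1)) * (γ*↑i) *
            ((t^γ)^i * t^(-γ) * (Real.Gamma (γ*↑i) * Real.Gamma (1-γ) / Real.Gamma (γ*↑i+1-γ)))
            = (Real.Gamma (1-γ) * t^(-γ)) * ((φ * t^γ)^i / Real.Gamma (γ*↑i+1-γ)) := by
          rw [hGadd, mul_pow]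
          field_simp
        rw [hlhs]
        show _ ≤ Real.Gamma (1-γ) * t^(-γ) * (((i:ℝ)+1) * (φ*t^γ)^i / Real.Gamma (γ*↑i + (1-γ)))
        rw [show γ*↑i + (1-γ) = γ*↑i+1-γ from by ring]
        apply mul_le_mul_of_nonneg_left _ (mul_nonneg hGγ.le (Real.rpow_nonneg ht.le _))
        apply (div_le_div_iff_of_pos_right hGig).mpr
        have hp : (0:ℝ) ≤ (φ * t^γ)^i :=
          pow_nonneg (mul_nonneg hφ.le (Real.rpow_nonneg ht.le γ)) i
        exact le_mul_of_one_le_left hp (by linarith [Nat.cast_nonneg (α := ℝ) i])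
    have hnorm : ∀ i : ℕ,
        (∫⁻ s in Ioo 0 t, ‖(mlc γ φ i * (γ*↑i)) * (s ^ (γ*↑i-1) * (t-s) ^ (-γ))‖₊)
        = ENNReal.ofReal (|mlc γ φ i * (γ*↑i)| *
          (t ^ (γ*↑i-γ) * (Real.Gamma (γ*↑i) * Real.Gamma (1-γ) / Real.Gamma (γ*↑i+1-γ)))) := by
      intro i
      rcases Nat.eq_zero_or_pos i with h0 | h1
      · subst h0
        simp
      · have hfnn : ∀ s ∈ Ioo (0:ℝ) t, (0:ℝ) ≤ s ^ (γ*↑i-1) * (t-s) ^ (-γ) := by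
          intro s hs
          exact mul_nonneg (Real.rpow_nonneg hs.1.le _)
            (Real.rpow_nonneg (by linarith [hs.2]) _)
        have h1' : ∀ᵐ s ∂(volume : Measure ℝ), s ∈ Ioo (0:ℝ) t →
            (‖(mlc γ φ i * (γ*↑i)) * (s ^ (γ*↑i-1) * (t-s) ^ (-γ))‖₊ : ENNReal)
            = ENNReal.ofReal (|mlc γ φ i * (γ*↑i)| * (s ^ (γ*↑i-1) * (t-s) ^ (-γ))) := by
          refine ae_of_all _ fun s hs => ?_
          rw [← enorm_eq_nnnorm, ← ofReal_norm, norm_mul, Real.norm_eq_abs, Real.norm_eq_abs,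
            abs_of_nonneg (hfnn s hs)]
        rw [setLIntegral_congr_fun_ae measurableSet_Ioo h1']
        have hint : Integrable (fun s => |mlc γ φ i * (γ*↑i)| * (s ^ (γ*↑i-1) * (t-s) ^ (-γ)))
            ((volume : Measure ℝ).restrict (Ioo 0 t)) := ((int_gi hγ hγ1 ht h1).1).const_mul _
        have hnn : 0 ≤ᵐ[(volume : Measure ℝ).restrict (Ioo 0 t)]
            (fun s => |mlc γ φ i * (γ*↑i)| * (s ^ (γ*↑i-1) * (t-s) ^ (-γ))) := by
          rw [EventuallyLE, ae_restrict_iff' measurableSet_Ioo]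
          exact ae_of_all _ fun s hs => mul_nonneg (abs_nonneg _) (hfnn s hs)
        rw [← ofReal_integral_eq_lintegral_ofReal hint hnn,
          MeasureTheory.integral_const_mul, (int_gi hγ hγ1 ht h1).2]
    have hlint : (∑' i : ℕ, ∫⁻ s in Ioo 0 t,
        ‖(mlc γ φ i * (γ*↑i)) * (s ^ (γ*↑i-1) * (t-s) ^ (-γ))‖₊) ≠ ⊤ := by
      have hfin : ENNReal.ofReal (∑' i, U i) ≠ ⊤ := ENNReal.ofReal_ne_top
      apply ne_top_of_le_ne_top hfin
      rw [ENNReal.ofReal_tsum_of_nonneg hU_nonneg hU_sum]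
      apply ENNReal.tsum_le_tsum
      intro i
      rw [hnorm i]
      exact ENNReal.ofReal_le_ofReal (hWfin i)
    rw [MeasureTheory.integral_tsum (fun i => (hInt i).aestronglyMeasurable) hlint]
    exact tsum_congr hval
  have hsum : ∑' i : ℕ, V i = Real.Gamma (1-γ) * (-φ * mittagLeffler γ φ t) := by
    have htg : ∀ j : ℕ, t ^ (γ*(j:ℝ)) = (t^γ)^j := fun j => by
      rw [← Real.rpow_natCast (t^γ) j, ← Real.rpow_mul ht.le]
    have hV1 : ∀ i : ℕ, V (i+1) = (Real.Gamma (1-γ) * (-φ)) * (mlc γ φ i * (t^γ)^i) := by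
      intro i
      have hxi : (0:ℝ) < γ * ((i:ℝ)+1) := by positivity
      have hGadd : Real.Gamma (γ*((i:ℝ)+1) + 1) = (γ*((i:ℝ)+1)) * Real.Gamma (γ*((i:ℝ)+1)) :=
        Real.Gamma_add_one hxi.ne'
      have hGi : 0 < Real.Gamma (γ*((i:ℝ)+1)) := Real.Gamma_pos_of_pos hxi
      have hGi1 : 0 < Real.Gamma (γ*(i:ℝ)+1) := Real.Gamma_pos_of_pos (by positivity)
      simp only [hV, mlc, Nat.cast_add, Nat.cast_one]
      rw [show γ*((i:ℝ)+1)-γ = γ*↑i from by ring, show γ*((i:ℝ)+1)+1-γ = γ*↑i+1 from by ring,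
        htg i, hGadd, pow_succ]
      field_simp
    have hRsum : Summable (fun i : ℕ => (Real.Gamma (1-γ) * (-φ)) * (mlc γ φ i * (t^γ)^i)) :=
      (summable_mlc_pow hγ hγ1 hφ (t^γ) (Real.rpow_nonneg ht.le γ)).mul_left _
    have hVsum : Summable V := by
      apply (summable_nat_add_iff 1).mp
      apply hRsum.congr
      intro i
      exact (hV1 i).symm
    have hV0 : V 0 = 0 := by simp [hV]
    rw [hVsum.tsum_eq_zero_add, hV0, zero_add]
    calc (∑' i : ℕ, V (i+1))
        = ∑' i : ℕ, (Real.Gamma (1-γ) * (-φ)) * (mlc γ φ i * (t^γ)^i) := tsum_congr hV1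
      _ = (Real.Gamma (1-γ) * (-φ)) * ∑' i : ℕ, mlc γ φ i * (t^γ)^i := tsum_mul_left
      _ = Real.Gamma (1-γ) * (-φ * mittagLeffler γ φ t) := by
          rw [ml_eq_tsum hγ ht.le]
          simp only [htg]
          ring
  rw [caputo, hmain, hsum, ← mul_assoc, inv_mul_cancel₀ hGγ.ne', one_mul]

end main

lemma caputo_const_mul (ν c z : ℝ) (f : ℝ → ℝ) :
    caputo ν (fun y => c * f y) z = c * caputo ν f z := by
  rw [caputo, caputo]
  have h1 : ∀ s : ℝ, (z-s) ^ (-ν) * deriv (fun y => c * f y) s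
      = c * ((z-s) ^ (-ν) * deriv f s) := by
    intro s
    rw [deriv_const_mul_field]
    ring
  simp only [h1]
  rw [intervalIntegral.integral_const_mul]
  ring

lemma caputo_mul_const (ν c z : ℝ) (f : ℝ → ℝ) :
    caputo ν (fun y => f y * c) z = caputo ν f z * c := by
  have : (fun y => f y * c) = fun y => c * f y := by funext y; ring
  rw [this, caputo_const_mul]
  ring

lemma caputo_rpow {ν ξ : ℝ} (hν : 0 < ν) (hν1 : ν < 1) (hξ : 0 < ξ) :
    caputo ν (fun x => x ^ (ν/2)) ξ
      = ((ν/2) * Real.Gamma (ν/2) / Real.Gamma (1-ν/2)) * ξ ^ (-(ν/2)) := by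
  have hGν : 0 < Real.Gamma (1-ν) := Real.Gamma_pos_of_pos (by linarith)
  rw [caputo, intervalIntegral.integral_of_le hξ.le, integral_Ioc_eq_integral_Ioo]
  have hEq : EqOn (fun s => (ξ-s) ^ (-ν) * deriv (fun x : ℝ => x ^ (ν/2)) s)
      (fun s => (ν/2) * (s ^ (ν/2-1) * (ξ-s) ^ (-ν))) (Ioo 0 ξ) := by
    intro s hs
    simp only
    rw [Real.deriv_rpow_const s (ν/2)]
    ring
  rw [setIntegral_congr_fun measurableSet_Ioo hEq, MeasureTheory.integral_const_mul]
  have hval := betaValue (show (0:ℝ) < ν/2 by linarith) (show (0:ℝ) < 1-ν by linarith) hξ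
  rw [show (1:ℝ)-ν-1 = -ν from by ring, show ν/2+(1-ν)-1 = -(ν/2) from by ring,
    show ν/2+(1-ν) = 1-ν/2 from by ring, intervalIntegral.integral_of_le hξ.le,
    integral_Ioc_eq_integral_Ioo] at hval
  rw [hval]
  calc (Real.Gamma (1-ν))⁻¹ * (ν/2 * (ξ ^ (-(ν/2)) *
        (Real.Gamma (ν/2) * Real.Gamma (1-ν) / Real.Gamma (1-ν/2))))
      = ((Real.Gamma (1-ν))⁻¹ * Real.Gamma (1-ν)) *
        ((ν/2) * Real.Gamma (ν/2) / Real.Gamma (1-ν/2) * ξ ^ (-(ν/2))) := by ring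
    _ = (ν/2) * Real.Gamma (ν/2) / Real.Gamma (1-ν/2) * ξ ^ (-(ν/2)) := by
        rw [inv_mul_cancel₀ hGν.ne', one_mul]


theorem spacetime_fractional_solution (γ φ ν k : ℝ) (hγ : γ ∈ Set.Ioo (0:ℝ) 1)
    (hφ : 0 < φ) (hν : ν ∈ Set.Ioo (0:ℝ) 1)
    (h : ℝ → ℝ → ℝ)
    (hdef : h = fun x t => x ^ (ν / 2) * mittagLeffler γ φ t) :
    (∀ x, h x 0 = x ^ (ν / 2)) ∧ (∀ t, h 0 t = 0) ∧
      ∀ x > (0:ℝ), ∀ t > (0:ℝ),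
        caputo γ (fun τ => h x τ) t
          = k * deriv (fun ξ => h ξ t * caputo ν (fun ξ' => h ξ' t) ξ) x - φ * h x t := by
  obtain ⟨hγ0, hγ1⟩ := hγ
  obtain ⟨hν0, hν1⟩ := hν
  refine ⟨?_, ?_, ?_⟩
  · intro x
    simp only [hdef, ml_zero hγ0, mul_one]
  · intro t
    simp only [hdef, Real.zero_rpow (show ν/2 ≠ 0 by positivity), zero_mul]
  · intro x hx t ht
    simp only [hdef]
    have hLHS : caputo γ (fun τ => x ^ (ν/2) * mittagLeffler γ φ τ) t
        = x ^ (ν/2) * (-φ * mittagLeffler γ φ t) := by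
      rw [caputo_const_mul, caputo_ml hγ0 hγ1 hφ ht]
    rw [hLHS]
    have hder : deriv (fun ξ => ξ ^ (ν/2) * mittagLeffler γ φ t *
        caputo ν (fun ξ' => ξ' ^ (ν/2) * mittagLeffler γ φ t) ξ) x = 0 := by
      have hev : (fun ξ => ξ ^ (ν/2) * mittagLeffler γ φ t *
          caputo ν (fun ξ' => ξ' ^ (ν/2) * mittagLeffler γ φ t) ξ)
          =ᶠ[nhds x] (fun _ => mittagLeffler γ φ t * mittagLeffler γ φ t *
            ((ν/2) * Real.Gamma (ν/2) / Real.Gamma (1-ν/2))) := by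
        filter_upwards [isOpen_Ioi.mem_nhds (show x ∈ Ioi (0:ℝ) from hx)] with ξ hξ
        have hξ0 : (0:ℝ) < ξ := hξ
        rw [caputo_mul_const, caputo_rpow hν0 hν1 hξ0]
        have hone : ξ ^ (ν/2) * ξ ^ (-(ν/2)) = 1 := by
          rw [← Real.rpow_add hξ0]
          simp
        calc ξ ^ (ν/2) * mittagLeffler γ φ t *
              ((ν/2) * Real.Gamma (ν/2) / Real.Gamma (1-ν/2) * ξ ^ (-(ν/2)) * mittagLeffler γ φ t)
            = (ξ ^ (ν/2) * ξ ^ (-(ν/2))) * (mittagLeffler γ φ t * mittagLeffler γ φ t *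
              ((ν/2) * Real.Gamma (ν/2) / Real.Gamma (1-ν/2))) := by ring
          _ = mittagLeffler γ φ t * mittagLeffler γ φ t *
              ((ν/2) * Real.Gamma (ν/2) / Real.Gamma (1-ν/2)) := by rw [hone, one_mul]
      rw [hev.deriv_eq, deriv_const]
    rw [hder]
    ring
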